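/- For every integer k ≥ 1, the binary word 0^{2k−2} 1^{2k−1} 0^{2k−1} 1^{2k−2} (of length 8k−6) contains no abelian square xx′ with |x| ≥ k. -/

import Mathlib

lemma count_take_word (a b i : ℕ) :
    ((List.replicate a false ++ List.replicate b true ++
      List.replicate b false ++ List.replicate a true).take i).count true
      = min (i - a) b + min (i - (a + 2 * b)) a := by
  simp [List.take_append, List.take_replicate, List.count_append,
    List.count_replicate]
  omega

theorem stmt_4 (k : ℕ) (hk : 1 ≤ k) :
    ¬ ∃ (u v x x' : List Bool),
      List.replicate (2 * k - 2) false ++ List.replicate (2 * k - 1) true ++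
        List.replicate (2 * k - 1) false ++ List.replicate (2 * k - 2) true
        = u ++ x ++ x' ++ v ∧ k ≤ x.length ∧ x'.Perm x := by
  rintro ⟨u, v, x, x', heq, hlen, hperm⟩
  set a := 2 * k - 2 with ha
  set b := 2 * k - 1 with hb
  set W : List Bool := List.replicate a false ++ List.replicate b true ++
      List.replicate b false ++ List.replicate a true with hW
  have hlen' : x'.length = x.length := hperm.length_eq
  have hcount : x'.count true = x.count true := hperm.count_eq true
  set p := u.length with hp
  set m := x.length with hm
  have hWlen : W.length = 2 * a + 2 * b := by simp [hW]; ring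
  have htot : 2 * a + 2 * b = p + m + m + v.length := by
    have := congrArg List.length heq
    simp [hW] at this
    omega
  have h1 : W.take p = u := by
    rw [heq, hp]
    rw [show u ++ x ++ x' ++ v = u ++ (x ++ x' ++ v) by simp]
    exact List.take_left
  have h2 : W.take (p + m) = u ++ x := by
    rw [heq]
    rw [show u ++ x ++ x' ++ v = (u ++ x) ++ (x' ++ v) by simp]
    rw [show p + m = (u ++ x).length by simp [hp, hm]]
    exact List.take_left
  have h3 : W.take (p + m + m) = u ++ x ++ x' := by
    rw [heq]
    rw [show u ++ x ++ x' ++ v = (u ++ x ++ x') ++ v by simp]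
    rw [show p + m + m = (u ++ x ++ x').length by simp [hp, hm, hlen']; omega]
    exact List.take_left
  have c1 := count_take_word a b p
  have c2 := count_take_word a b (p + m)
  have c3 := count_take_word a b (p + m + m)
  rw [hW] at h1 h2 h3
  rw [h1] at c1
  rw [h2, List.count_append] at c2
  rw [h3, List.count_append, List.count_append] at c3
  rw [hcount] at c3
  omega
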